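/- Let A : ℝ → SL(3,ℝ) be a C² solution of A'' = Λ(A,A')A⁻ᵀ with Λ(A,A') = tr((A'A⁻¹)²)/tr(A⁻ᵀA⁻¹), and suppose Λ(A(t),A'(t)) ≥ 0 for all t ≥ T and E_K(0) = (1/2)tr(A'(0)A'(0)ᵀ) > 0. Then there exist constants 0 < c ≤ C with c(1+|t|)² ≤ tr(A(t)A(t)ᵀ) ≤ C(1+|t|)² for all t ≥ T. -/

import Mathlib

open Matrix Filter Topology
noncomputable section
attribute [local instance] Matrix.normedAddCommGroup Matrix.normedSpace

abbrev M3 := Matrix (Fin 3) (Fin 3) ℝ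

/-- The coefficient Λ(A,A') = tr((A'A⁻¹)²)/tr(A⁻ᵀA⁻¹) for incompressible affine motion. -/
def Lam (A A' : M3) : ℝ :=
  Matrix.trace ((A' * A⁻¹) * (A' * A⁻¹)) / Matrix.trace ((A⁻¹)ᵀ * A⁻¹)

namespace Stmt19Aux

lemma sq_sum_def (M : M3) : Matrix.trace (M * Mᵀ) = ∑ i, ∑ j, (M i j)^2 := by
  simp [Matrix.trace, Matrix.mul_apply, Matrix.diag, sq]

lemma tr_mul_t (B M : M3) : Matrix.trace (B * Mᵀ) = ∑ i, ∑ j, B i j * M i j := by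
  simp [Matrix.trace, Matrix.mul_apply, Matrix.diag]

lemma trace_mul_self_le (B : M3) :
    Matrix.trace (B * B) ≤ ∑ i, ∑ j, (B i j)^2 := by
  have h : Matrix.trace (B * B) = ∑ i, ∑ j, B i j * B j i := by
    simp [Matrix.trace, Matrix.mul_apply, Matrix.diag]
  rw [h]
  have h2 : ∑ i, ∑ j, B i j * B j i ≤ ∑ i, ∑ j, ((B i j)^2 + (B j i)^2)/2 := by
    refine Finset.sum_le_sum fun i _ => Finset.sum_le_sum fun j _ => ?_
    nlinarith [sq_nonneg (B i j - B j i)]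
  refine h2.trans_eq ?_
  rw [show ∑ i, ∑ j, ((B i j)^2 + (B j i)^2)/2
      = ((∑ i, ∑ j, (B i j)^2) + (∑ i, ∑ j, (B j i)^2))/2 by
    simp [← Finset.sum_add_distrib, Finset.sum_div]]
  rw [Finset.sum_comm (f := fun i j => (B j i)^2)]
  ring

lemma frob_submul (B C : M3) :
    ∑ i, ∑ j, ((B * C) i j)^2 ≤ (∑ i, ∑ j, (B i j)^2) * (∑ i, ∑ j, (C i j)^2) := by
  have h1 : ∀ i j : Fin 3, ((B * C) i j)^2 ≤ (∑ k, (B i k)^2) * (∑ k, (C k j)^2) := fun i j => by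
    rw [Matrix.mul_apply]
    exact Finset.sum_mul_sq_le_sq_mul_sq _ _ _
  calc ∑ i, ∑ j, ((B * C) i j)^2 ≤ ∑ i, ∑ j, (∑ k, (B i k)^2) * (∑ k, (C k j)^2) :=
        Finset.sum_le_sum fun i _ => Finset.sum_le_sum fun j _ => h1 i j
    _ = (∑ i, ∑ j, (B i j)^2) * (∑ i, ∑ j, (C i j)^2) := by
        rw [Finset.sum_mul]
        refine Finset.sum_congr rfl fun i _ => ?_
        rw [← Finset.mul_sum, Finset.sum_comm (f := fun j k => (C k j)^2)]

lemma sum_sq_pos (M : M3) (h : M ≠ 0) : 0 < ∑ i, ∑ j, (M i j)^2 := by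
  by_contra hc
  push_neg at hc
  have hz : ∀ i ∈ Finset.univ, ∑ j, (M i j)^2 = (0:ℝ) := by
    have := le_antisymm hc (Finset.sum_nonneg fun i _ => Finset.sum_nonneg fun j _ => sq_nonneg _)
    intro i hi
    exact (Finset.sum_eq_zero_iff_of_nonneg
      (fun i _ => Finset.sum_nonneg fun j _ => sq_nonneg (M i j))).mp this i hi
  apply h
  ext i j
  have := (Finset.sum_eq_zero_iff_of_nonneg (fun j _ => sq_nonneg (M i j))).mp
    (hz i (Finset.mem_univ i)) j (Finset.mem_univ j)
  simpa using pow_eq_zero_iff (n := 2) (by norm_num) |>.mp this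

def entryCLM (i j : Fin 3) : M3 →L[ℝ] ℝ :=
  LinearMap.toContinuousLinearMap
    ((LinearMap.proj j).comp (LinearMap.proj (R := ℝ) (φ := fun _ : Fin 3 => Fin 3 → ℝ) i))

lemma hasDerivAt_entry {A : ℝ → M3} {t : ℝ} (h : DifferentiableAt ℝ A t) (i j : Fin 3) :
    HasDerivAt (fun s => A s i j) (deriv A t i j) t :=
  ((entryCLM i j).hasFDerivAt.comp_hasDerivAt t h.hasDerivAt)

lemma jacobi (A : ℝ → M3) (t : ℝ) (hdiff : Differentiable ℝ A)
    (hdet : ∀ s, (A s).det = 1) :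
    Matrix.trace ((A t)⁻¹ * deriv A t) = 0 := by
  have ha : ∀ i j, HasDerivAt (fun s => A s i j) (deriv A t i j) t :=
    fun i j => hasDerivAt_entry (hdiff t) i j
  have h1 := (((((((ha 0 0).mul (ha 1 1)).mul (ha 2 2)).sub
      (((ha 0 0).mul (ha 1 2)).mul (ha 2 1))).sub
      (((ha 0 1).mul (ha 1 0)).mul (ha 2 2))).add
      (((ha 0 1).mul (ha 1 2)).mul (ha 2 0))).add
      ((((ha 0 2).mul (ha 1 0)).mul (ha 2 1)))).sub
      (((ha 0 2).mul (ha 1 1)).mul (ha 2 0))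
  have h2 := h1.congr_of_eventuallyEq (Filter.Eventually.of_forall fun s => det_fin_three (A s))
  have h3 : HasDerivAt (fun s => (A s).det) 0 t := by
    have : (fun s => (A s).det) = fun _ => (1:ℝ) := funext fun s => hdet s
    rw [this]; exact hasDerivAt_const t 1
  have hD0 := h3.unique h2
  rw [Matrix.inv_def, hdet, Ring.inverse_one, one_smul]
  rw [Matrix.adjugate_fin_three]
  simp [Matrix.trace, Matrix.mul_apply, Matrix.diag, Fin.sum_univ_three]
  simp only [Pi.mul_apply] at hD0
  linear_combination -hD0

lemma quad_below (f f' f'' : ℝ → ℝ) (T k : ℝ)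
    (hd1 : ∀ t, HasDerivAt f (f' t) t)
    (hd2 : ∀ t, HasDerivAt f' (f'' t) t)
    (hk : ∀ t, T ≤ t → k ≤ f'' t) :
    ∀ t, T ≤ t → f T + f' T * (t - T) + k/2 * (t-T)^2 ≤ f t := by
  have hlin : ∀ t : ℝ, HasDerivAt (fun s : ℝ => s - T) 1 t :=
    fun t => (hasDerivAt_id t).sub_const T
  set G : ℝ → ℝ := fun t => f' t - (f' T + k * (t - T)) with hG
  have hG' : ∀ t, HasDerivAt G (f'' t - k) t := by
    intro t
    have h2 : HasDerivAt (fun s => f' T + k * (s - T)) (k * 1) t :=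
      ((hlin t).const_mul k).const_add (f' T)
    exact ((hd2 t).sub h2).congr_deriv (by ring)
  have hGmono : MonotoneOn G (Set.Ici T) := by
    apply monotoneOn_of_deriv_nonneg (convex_Ici T)
      (fun t _ => (hG' t).differentiableAt.continuousAt.continuousWithinAt)
      (fun t _ => (hG' t).differentiableAt.differentiableWithinAt)
    intro t ht
    rw [interior_Ici] at ht
    rw [(hG' t).deriv]
    linarith [hk t (le_of_lt ht)]
  have hGnn : ∀ t, T ≤ t → 0 ≤ G t := by
    intro t ht
    have := hGmono (Set.self_mem_Ici) (by exact ht) ht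
    simpa [hG] using this
  set g : ℝ → ℝ := fun t => f t - (f T + f' T * (t - T) + k/2 * (t-T)^2) with hg
  have hg' : ∀ t, HasDerivAt g (G t) t := by
    intro t
    have h2 : HasDerivAt (fun s => f T + f' T * (s - T) + k/2 * (s-T)^2)
        (f' T * 1 + k/2 * (2 * (t-T)^1 * 1)) t :=
      (((hlin t).const_mul (f' T)).const_add (f T)).add (((hlin t).pow 2).const_mul (k/2))
    have := (hd1 t).sub h2
    refine this.congr_deriv (Eq.symm ?_)
    show f' t - (f' T + k * (t - T)) = _; ring
  have hgmono : MonotoneOn g (Set.Ici T) := by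
    apply monotoneOn_of_deriv_nonneg (convex_Ici T)
      (fun t _ => (hg' t).differentiableAt.continuousAt.continuousWithinAt)
      (fun t _ => (hg' t).differentiableAt.differentiableWithinAt)
    intro t ht
    rw [interior_Ici] at ht
    rw [(hg' t).deriv]
    exact hGnn t ht.le
  intro t ht
  have h0 : g T = 0 := by simp [hg]
  have h1 : g T ≤ g t := hgmono Set.self_mem_Ici ht ht
  rw [h0] at h1
  simp only [hg] at h1
  linarith

lemma quad_above (f f' f'' : ℝ → ℝ) (T K : ℝ)
    (hd1 : ∀ t, HasDerivAt f (f' t) t)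
    (hd2 : ∀ t, HasDerivAt f' (f'' t) t)
    (hK : ∀ t, T ≤ t → f'' t ≤ K) :
    ∀ t, T ≤ t → f t ≤ f T + f' T * (t - T) + K/2 * (t-T)^2 := by
  intro t ht
  have := quad_below (fun s => -f s) (fun s => -f' s) (fun s => -f'' s) T (-K)
    (fun s => (hd1 s).neg) (fun s => (hd2 s).neg)
    (fun s hs => neg_le_neg (hK s hs)) t ht
  have h2 : (-K)/2 = -(K/2) := by ring
  linarith [this]

set_option maxHeartbeats 1000000 in
lemma pack (X : ℝ → ℝ) (T b e K : ℝ) (he : 0 < e) (hXc : Continuous X)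
    (hpos : ∀ t, 0 < X t)
    (hlow : ∀ t, T ≤ t → X T + b * (t - T) + e * (t-T)^2 ≤ X t)
    (hup : ∀ t, T ≤ t → X t ≤ X T + b * (t - T) + K * (t-T)^2) :
    ∃ c C : ℝ, 0 < c ∧ c ≤ C ∧ ∀ t : ℝ, T ≤ t →
      c * (1 + |t|) ^ 2 ≤ X t ∧ X t ≤ C * (1 + |t|) ^ 2 := by
  obtain ⟨T₂, hT₂⟩ : ∃ x : ℝ, x = T + max (2*|b|/e) (1+|T|) := ⟨_, rfl⟩
  have hTT₂ : T ≤ T₂ := by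
    have : (0:ℝ) ≤ max (2*|b|/e) (1+|T|) :=
      le_trans (by positivity) (le_max_right _ _)
    rw [hT₂]; linarith
  obtain ⟨x₀, hx₀mem, hx₀min⟩ := isCompact_Icc.exists_isMinOn (Set.nonempty_Icc.mpr hTT₂)
    hXc.continuousOn (s := Set.Icc T T₂)
  obtain ⟨m, hm⟩ : ∃ x : ℝ, x = X x₀ := ⟨_, rfl⟩
  have hmpos : 0 < m := hm ▸ hpos x₀
  obtain ⟨M, hM⟩ : ∃ x : ℝ, x = (1 + |T| + |T₂|)^2 := ⟨_, rfl⟩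
  have hMpos : 0 < M := by rw [hM]; positivity
  obtain ⟨c, hc⟩ : ∃ x : ℝ, x = min (e/8) (m/M) := ⟨_, rfl⟩
  have hcpos : 0 < c := hc ▸ lt_min (by positivity) (by positivity)
  obtain ⟨C', hC'⟩ : ∃ x : ℝ, x = X T + |b| * (1+|T|) + max K 0 * (1+|T|)^2 := ⟨_, rfl⟩
  have hC'nn : 0 < C' := by
    rw [hC']
    have := hpos T
    have h1 : (0:ℝ) ≤ |b| * (1+|T|) := by positivity
    have h2 : (0:ℝ) ≤ max K 0 * (1+|T|)^2 := mul_nonneg (le_max_right _ _) (by positivity)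
    linarith
  refine ⟨c, max C' c, hcpos, le_max_right _ _, fun t ht => ?_⟩
  constructor
  · -- lower bound
    rcases le_or_gt t T₂ with hcase | hcase
    · -- compact piece
      have hmle : m ≤ X t := hm ▸ hx₀min (Set.mem_Icc.mpr ⟨ht, hcase⟩)
      have habs : |t| ≤ |T| + |T₂| := by
        rw [abs_le]
        constructor
        · have : -|T| ≤ T := neg_abs_le T
          have h2 : (0:ℝ) ≤ |T₂| := abs_nonneg _
          linarith
        · have : T₂ ≤ |T₂| := le_abs_self T₂
          have h2 : (0:ℝ) ≤ |T| := abs_nonneg _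
          linarith
      have h1 : (1 + |t|)^2 ≤ M := by
        rw [hM]
        have h0 : (0:ℝ) ≤ 1 + |t| := by positivity
        nlinarith [abs_nonneg t]
      calc c * (1+|t|)^2 ≤ (m/M) * M := by
            rw [hc]
            apply mul_le_mul (min_le_right _ _) h1 (by positivity)
            positivity
        _ = m := by field_simp
        _ ≤ X t := hmle
    · -- far piece
      rw [hT₂] at hcase
      have hmax : max (2*|b|/e) (1+|T|) < t - T :=
        lt_sub_iff_add_lt.mpr (by rw [add_comm]; exact hcase)
      have hs1 : 2*|b|/e ≤ t - T := ((le_max_left _ _).trans hmax.le)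
      have hs2 : 1 + |T| ≤ t - T := ((le_max_right _ _).trans hmax.le)
      have hb : 2*|b| ≤ e * (t - T) := by
        have h := (div_le_iff₀ he).mp hs1
        calc 2*|b| ≤ (t - T) * e := h
          _ = e * (t - T) := mul_comm _ _
      clear hs1 hmax hcase
      have hs0 : 0 ≤ t - T := le_trans (by positivity) hs2
      have hXl := hlow t ht
      have hX1 : (e/2) * (t-T)^2 ≤ X t := by
        have hbb : -|b| ≤ b := neg_abs_le b
        nlinarith [hpos T, mul_le_mul_of_nonneg_right hb hs0]
      have habs : 1 + |t| ≤ 2 * (t - T) := by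
        have : |t| ≤ |T| + (t - T) := by
          rw [abs_le]; constructor
          · have := neg_abs_le T; linarith [abs_nonneg T]
          · have := le_abs_self T; linarith
        linarith
      have : c * (1+|t|)^2 ≤ (e/8) * (2*(t-T))^2 := by
        rw [hc]
        apply mul_le_mul (min_le_left _ _) (by nlinarith [abs_nonneg t]) (by positivity) (by positivity)
      calc c * (1+|t|)^2 ≤ (e/8) * (2*(t-T))^2 := this
        _ = (e/2) * (t-T)^2 := by ring
        _ ≤ X t := hX1
  · -- upper bound
    have hXu := hup t ht
    have hs0 : 0 ≤ t - T := by linarith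
    have hst : t - T ≤ (1+|T|) * (1+|t|) := by
      have h1 : t - T ≤ |t| + |T| := by
        have := le_abs_self t; have := neg_abs_le T; linarith
      nlinarith [abs_nonneg t, abs_nonneg T]
    have h1t : (1:ℝ) ≤ (1+|t|)^2 := by nlinarith [abs_nonneg t]
    have hKle : K * (t-T)^2 ≤ max K 0 * ((1+|T|)*(1+|t|))^2 := by
      rcases le_total K 0 with hK0 | hK0
      · have : K * (t-T)^2 ≤ 0 := mul_nonpos_of_nonpos_of_nonneg hK0 (by positivity)
        have h2 : (0:ℝ) ≤ max K 0 * ((1+|T|)*(1+|t|))^2 :=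
          mul_nonneg (le_max_right _ _) (by positivity)
        linarith
      · rw [max_eq_left hK0]
        apply mul_le_mul_of_nonneg_left _ hK0
        apply pow_le_pow_left₀ hs0 hst
    have hble : b * (t-T) ≤ |b| * ((1+|T|)*(1+|t|)) := by
      calc b * (t-T) ≤ |b * (t-T)| := le_abs_self _
        _ = |b| * |t - T| := abs_mul _ _
        _ = |b| * (t-T) := by rw [abs_of_nonneg hs0]
        _ ≤ |b| * ((1+|T|)*(1+|t|)) := mul_le_mul_of_nonneg_left hst (abs_nonneg b)
    have hXT : X T ≤ X T * (1+|t|)^2 := le_mul_of_one_le_right (hpos T).le h1t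
    have : X t ≤ C' * (1+|t|)^2 := by
      rw [hC']
      have e1 : |b| * ((1+|T|)*(1+|t|)) ≤ |b| * (1+|T|) * (1+|t|)^2 := by
        have : (1+|t|) ≤ (1+|t|)^2 := by nlinarith [abs_nonneg t]
        have h0 : 0 ≤ |b| * (1+|T|) := by positivity
        calc |b| * ((1+|T|)*(1+|t|)) = |b| * (1+|T|) * (1+|t|) := by ring
          _ ≤ |b| * (1+|T|) * (1+|t|)^2 := mul_le_mul_of_nonneg_left this h0
      have e2 : max K 0 * ((1+|T|)*(1+|t|))^2 = max K 0 * (1+|T|)^2 * (1+|t|)^2 := by ring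
      rw [e2] at hKle
      have hble2 := hble.trans e1
      ring_nf
      ring_nf at hXu hXT hble2 hKle
      linarith [hXu, hXT, hble2, hKle]
    calc X t ≤ C' * (1+|t|)^2 := this
      _ ≤ max C' c * (1+|t|)^2 := by
        apply mul_le_mul_of_nonneg_right (le_max_left _ _) (by positivity)

end Stmt19Aux

open Stmt19Aux in
set_option maxHeartbeats 1000000 in
/-- quadratic growth of tr(A Aᵀ) for incompressible affine motion
with nonnegative pressure coefficient for t ≥ T and positive kinetic energy. -/
theorem stmt19 (A : ℝ → M3) (T : ℝ)
    (hA : ContDiff ℝ 2 A)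
    (hdet : ∀ t : ℝ, (A t).det = 1)
    (hODE : ∀ t : ℝ, deriv (deriv A) t = Lam (A t) (deriv A t) • ((A t)⁻¹)ᵀ)
    (hΛ : ∀ t : ℝ, T ≤ t → 0 ≤ Lam (A t) (deriv A t))
    (hEK : 0 < (1/2) * Matrix.trace (deriv A 0 * (deriv A 0)ᵀ)) :
    ∃ c C : ℝ, 0 < c ∧ c ≤ C ∧ ∀ t : ℝ, T ≤ t →
      c * (1 + |t|) ^ 2 ≤ Matrix.trace (A t * (A t)ᵀ) ∧
      Matrix.trace (A t * (A t)ᵀ) ≤ C * (1 + |t|) ^ 2 := by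
  -- differentiability
  have hA1 : Differentiable ℝ A := hA.differentiable (by norm_num)
  have hA2 : Differentiable ℝ (deriv A) := by
    have h21 : (2 : WithTop ℕ∞) = 1 + 1 := by norm_num
    have := (contDiff_succ_iff_deriv (n := 1)).mp (h21 ▸ hA)
    exact this.2.2.differentiable (by norm_num)
  have ha : ∀ t (i j : Fin 3), HasDerivAt (fun s => A s i j) (deriv A t i j) t :=
    fun t i j => hasDerivAt_entry (hA1 t) i j
  have hb : ∀ t (i j : Fin 3), HasDerivAt (fun s => deriv A s i j) (deriv (deriv A) t i j) t :=
    fun t i j => hasDerivAt_entry (hA2 t) i j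
  -- basic matrix facts
  have hu : ∀ t, IsUnit (A t).det := fun t => by rw [hdet]; exact isUnit_one
  have hinv3 : ∀ t, Matrix.trace (((A t)⁻¹)ᵀ * (A t)ᵀ) = 3 := by
    intro t
    rw [← Matrix.transpose_mul, Matrix.trace_transpose, Matrix.mul_nonsing_inv _ (hu t),
      Matrix.trace_one]
    norm_num
  -- the three scalar functions
  set X : ℝ → ℝ := fun t => Matrix.trace (A t * (A t)ᵀ) with hXdef
  set Y : ℝ → ℝ := fun t => Matrix.trace (deriv A t * (A t)ᵀ) with hYdef
  set E : ℝ → ℝ := fun t => Matrix.trace (deriv A t * (deriv A t)ᵀ) with hEdef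
  have hXsum : ∀ t, X t = ∑ i, ∑ j, (A t i j)^2 := fun t => sq_sum_def (A t)
  have hYsum : ∀ t, Y t = ∑ i, ∑ j, deriv A t i j * A t i j := fun t => tr_mul_t _ _
  have hEsum : ∀ t, E t = ∑ i, ∑ j, (deriv A t i j)^2 := fun t => sq_sum_def (deriv A t)
  -- derivative of X
  have hX' : ∀ t, HasDerivAt X (2 * Y t) t := by
    intro t
    have hsum := HasDerivAt.sum (fun i (_ : i ∈ Finset.univ) =>
      HasDerivAt.sum (fun j (_ : j ∈ Finset.univ) => (ha t i j).pow 2))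
    have := hsum.congr_of_eventuallyEq (Filter.Eventually.of_forall fun s => hXsum s)
    refine this.congr_deriv (Eq.symm ?_)
    rw [hYsum, Finset.mul_sum]
    refine Finset.sum_congr rfl fun i _ => ?_
    rw [Finset.mul_sum]
    refine Finset.sum_congr rfl fun j _ => ?_
    push_cast
    ring
  -- derivative of Y
  have hY' : ∀ t, HasDerivAt Y (3 * Lam (A t) (deriv A t) + E t) t := by
    intro t
    have hsum := HasDerivAt.sum (fun i (_ : i ∈ Finset.univ) =>
      HasDerivAt.sum (fun j (_ : j ∈ Finset.univ) => (hb t i j).mul (ha t i j)))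
    have hres := hsum.congr_of_eventuallyEq (Filter.Eventually.of_forall fun s => hYsum s)
    refine hres.congr_deriv (Eq.symm ?_)
    have hsplit : ∀ i : Fin 3, ∑ j, (deriv (deriv A) t i j * A t i j
        + deriv A t i j * deriv A t i j)
        = (∑ j, deriv (deriv A) t i j * A t i j) + ∑ j, (deriv A t i j)^2 := by
      intro i
      rw [Finset.sum_add_distrib]
      congr 1
      exact Finset.sum_congr rfl fun j _ => by ring
    have h4 : ∑ i, ∑ j, deriv (deriv A) t i j * A t i j = Lam (A t) (deriv A t) * 3 := by
      rw [hODE t]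
      calc ∑ i, ∑ j, (Lam (A t) (deriv A t) • ((A t)⁻¹)ᵀ) i j * A t i j
          = Lam (A t) (deriv A t) * ∑ i, ∑ j, ((A t)⁻¹)ᵀ i j * A t i j := by
            simp [Matrix.smul_apply, smul_eq_mul, Finset.mul_sum, mul_assoc]
        _ = Lam (A t) (deriv A t) * Matrix.trace (((A t)⁻¹)ᵀ * (A t)ᵀ) := by rw [tr_mul_t]
        _ = Lam (A t) (deriv A t) * 3 := by rw [hinv3 t]
    calc (3 : ℝ) * Lam (A t) (deriv A t) + E t
        = (∑ i, ∑ j, deriv (deriv A) t i j * A t i j) + ∑ i, ∑ j, (deriv A t i j)^2 := by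
          rw [h4, hEsum]; ring
      _ = ∑ i, ∑ j, (deriv (deriv A) t i j * A t i j + deriv A t i j * deriv A t i j) := by
          rw [← Finset.sum_add_distrib]
          exact Finset.sum_congr rfl fun i _ => (hsplit i).symm
  -- derivative of E is zero
  have hE' : ∀ t, HasDerivAt E 0 t := by
    intro t
    have hsum := HasDerivAt.sum (fun i (_ : i ∈ Finset.univ) =>
      HasDerivAt.sum (fun j (_ : j ∈ Finset.univ) => (hb t i j).mul (hb t i j)))
    have hres := hsum.congr_of_eventuallyEq (Filter.Eventually.of_forall fun s =>
      (hEsum s).trans (Finset.sum_congr rfl fun i _ => Finset.sum_congr rfl fun j _ => sq (deriv A s i j)))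
    refine hres.congr_deriv (Eq.symm ?_)
    have hjac : Matrix.trace ((A t)⁻¹ * deriv A t) = 0 := jacobi A t hA1 hdet
    have h5 : ∑ i, ∑ j, deriv (deriv A) t i j * deriv A t i j = 0 := by
      rw [hODE t]
      calc ∑ i, ∑ j, (Lam (A t) (deriv A t) • ((A t)⁻¹)ᵀ) i j * deriv A t i j
          = Lam (A t) (deriv A t) * ∑ i, ∑ j, ((A t)⁻¹)ᵀ i j * deriv A t i j := by
            simp [Matrix.smul_apply, smul_eq_mul, Finset.mul_sum, mul_assoc]
        _ = Lam (A t) (deriv A t) * Matrix.trace (((A t)⁻¹)ᵀ * (deriv A t)ᵀ) := by rw [tr_mul_t]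
        _ = 0 := by
            rw [← Matrix.transpose_mul, Matrix.trace_transpose, Matrix.trace_mul_comm, hjac,
              mul_zero]
    calc (0:ℝ) = 2 * ∑ i, ∑ j, deriv (deriv A) t i j * deriv A t i j := by
          rw [h5, mul_zero]
      _ = ∑ i, ∑ j, (deriv (deriv A) t i j * deriv A t i j
            + deriv A t i j * deriv (deriv A) t i j) := by
          rw [Finset.mul_sum]
          refine Finset.sum_congr rfl fun i _ => ?_
          rw [Finset.mul_sum]
          exact Finset.sum_congr rfl fun j _ => by ring
  -- energy is constant and positive
  have hEconst : ∀ t, E t = E 0 :=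
    fun t => is_const_of_deriv_eq_zero (fun s => (hE' s).differentiableAt)
      (fun s => (hE' s).deriv) t 0
  have hE0 : 0 < E 0 := by
    have : E 0 = Matrix.trace (deriv A 0 * (deriv A 0)ᵀ) := rfl
    linarith [hEK]
  -- Λ ≤ E
  have hLam_le : ∀ t, Lam (A t) (deriv A t) ≤ E t := by
    intro t
    have hAt_inv : A t * (A t)⁻¹ = 1 := Matrix.mul_nonsing_inv _ (hu t)
    have hinv_ne : (A t)⁻¹ ≠ 0 := by
      intro h
      rw [h, mul_zero] at hAt_inv
      exact one_ne_zero hAt_inv.symm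
    have hden_sum : Matrix.trace (((A t)⁻¹)ᵀ * (A t)⁻¹) = ∑ i, ∑ j, ((A t)⁻¹ i j)^2 := by
      rw [Matrix.trace_mul_comm, sq_sum_def]
    have hden_pos : 0 < Matrix.trace (((A t)⁻¹)ᵀ * (A t)⁻¹) := by
      rw [hden_sum]; exact sum_sq_pos _ hinv_ne
    rw [Lam, div_le_iff₀ hden_pos]
    calc Matrix.trace ((deriv A t * (A t)⁻¹) * (deriv A t * (A t)⁻¹))
        ≤ ∑ i, ∑ j, ((deriv A t * (A t)⁻¹) i j)^2 := trace_mul_self_le _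
      _ ≤ (∑ i, ∑ j, (deriv A t i j)^2) * (∑ i, ∑ j, ((A t)⁻¹ i j)^2) := frob_submul _ _
      _ = E t * Matrix.trace (((A t)⁻¹)ᵀ * (A t)⁻¹) := by rw [hEsum, hden_sum]
  -- positivity and continuity of X
  have hXpos : ∀ t, 0 < X t := by
    intro t
    have hne : A t ≠ 0 := by
      intro h
      have := hdet t
      rw [h] at this
      simp [Matrix.det_zero] at this
    rw [hXsum]
    exact sum_sq_pos _ hne
  have hXc : Continuous X := by
    have : X = fun t => ∑ i, ∑ j, (A t i j)^2 := funext hXsum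
    rw [this]
    refine continuous_finset_sum _ fun i _ => continuous_finset_sum _ fun j _ => ?_
    have hcont : Continuous fun t => A t i j :=
      continuous_iff_continuousAt.mpr fun t => (ha t i j).continuousAt
    exact hcont.pow 2
  -- second derivative function of X
  have hd2 : ∀ t, HasDerivAt (fun s => 2 * Y s)
      (2 * (3 * Lam (A t) (deriv A t) + E t)) t := fun t => (hY' t).const_mul 2
  -- quadratic bounds
  have hlowq := quad_below X (fun s => 2 * Y s)
    (fun s => 2 * (3 * Lam (A s) (deriv A s) + E s)) T (2 * E 0)
    hX' hd2 (fun s hs => by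
      have h1 := hΛ s hs
      have h2 := hEconst s
      nlinarith)
  have hupq := quad_above X (fun s => 2 * Y s)
    (fun s => 2 * (3 * Lam (A s) (deriv A s) + E s)) T (8 * E 0)
    hX' hd2 (fun s hs => by
      have h1 := hLam_le s
      have h2 := hEconst s
      nlinarith)
  have hlow : ∀ t, T ≤ t → X T + (2 * Y T) * (t - T) + E 0 * (t-T)^2 ≤ X t := by
    intro t ht
    have := hlowq t ht
    have he : (2 * E 0)/2 = E 0 := by ring
    nlinarith [this]
  have hup : ∀ t, T ≤ t → X t ≤ X T + (2 * Y T) * (t - T) + (4 * E 0) * (t-T)^2 := by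
    intro t ht
    have := hupq t ht
    nlinarith [this]
  obtain ⟨c, C, hc, hcC, hbound⟩ := pack X T (2 * Y T) (E 0) (4 * E 0) hE0 hXc hXpos hlow hup
  exact ⟨c, C, hc, hcC, hbound⟩
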